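/- arXiv:1903.05486 — 5 statements merged into one kernel-verified Lean document; each statement's English description precedes it below -/
import Mathlib

section
/- Let M be an m×m row stochastic matrix whose transpose has a strongly connected graph (i.e., M is irreducible). Then there exists a diagonal matrix Π with positive diagonal entries such that L = Π − M' Π M is positive semidefinite and L𝟏 = 0, where 𝟏 is the all-ones vector. -/
open scoped Matrix


/-- Lemma 1, first part: for a row stochastic matrix `M` whose transpose has a
strongly connected graph, there is a positive diagonal matrix `Π` such that
`L = Π − MᵀΠM` is positive semidefinite and `L 𝟏 = 0`. -/
theorem stmt5 {m : ℕ} (M : Matrix (Fin m) (Fin m) ℝ)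
    (hnonneg : ∀ i j, 0 ≤ M i j)
    (hrow : ∀ i, ∑ j, M i j = 1)
    (hconn : ∀ i j : Fin m, Relation.TransGen (fun a b => M.transpose a b ≠ 0) i j) :
    ∃ pi : Fin m → ℝ, (∀ i, 0 < pi i) ∧
      (Matrix.diagonal pi - M.transpose * Matrix.diagonal pi * M).PosSemidef ∧
      (Matrix.diagonal pi - M.transpose * Matrix.diagonal pi * M).mulVec
        (fun _ => 1) = 0 := by
  rcases Nat.eq_zero_or_pos m with hm | hm
  · subst hm
    refine ⟨fun _ => 1, fun i => i.elim0, ⟨?_, ?_⟩, ?_⟩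
    · ext i j; exact i.elim0
    · intro x
      simp [Finsupp.sum, Finset.eq_empty_of_isEmpty x.support]
    · ext i; exact i.elim0
  -- Step 1: a nonzero vector v with Mᵀ v = v
  have hdet : (M.transpose - 1).det = 0 := by
    rw [show M.transpose - (1 : Matrix (Fin m) (Fin m) ℝ) = (M - 1).transpose by
      simp [Matrix.transpose_sub], Matrix.det_transpose]
    rw [← Matrix.exists_mulVec_eq_zero_iff]
    refine ⟨fun _ => 1, ?_, ?_⟩
    · intro h
      have := congrFun h ⟨0, hm⟩
      norm_num at this
    · ext i
      simp [Matrix.sub_mulVec, Matrix.mulVec, dotProduct, hrow i, Matrix.one_apply]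
  obtain ⟨v, hv0, hv⟩ := (Matrix.exists_mulVec_eq_zero_iff).2 hdet
  have hvfix : M.transpose.mulVec v = v := by
    have := hv
    rw [Matrix.sub_mulVec, Matrix.one_mulVec, sub_eq_zero] at this
    exact this
  -- Step 2: π = |v| is a nonnegative nonzero fixed vector
  set a : Fin m → ℝ := fun i => |v i| with ha
  have hafix : M.transpose.mulVec a = a := by
    have key : ∀ j, a j ≤ M.transpose.mulVec a j := by
      intro j
      have : a j = |∑ i, M.transpose j i * v i| := by
        rw [ha]; simp only
        conv_lhs => rw [← hvfix]
        rfl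
      rw [this]
      calc |∑ i, M.transpose j i * v i| ≤ ∑ i, |M.transpose j i * v i| :=
            Finset.abs_sum_le_sum_abs _ _
        _ = ∑ i, M.transpose j i * |v i| := by
            refine Finset.sum_congr rfl fun i _ => ?_
            simp [Matrix.transpose_apply, abs_mul, abs_of_nonneg (hnonneg i j)]
        _ = M.transpose.mulVec a j := rfl
    have hsum : ∑ j, M.transpose.mulVec a j = ∑ j, a j := by
      simp only [Matrix.mulVec, dotProduct, Matrix.transpose_apply]
      rw [Finset.sum_comm]
      refine Finset.sum_congr rfl fun i _ => ?_
      rw [← Finset.sum_mul, hrow i, one_mul]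
    have hzero : ∑ j, (M.transpose.mulVec a j - a j) = 0 := by
      rw [Finset.sum_sub_distrib, hsum, sub_self]
    have := (Finset.sum_eq_zero_iff_of_nonneg
      (fun j _ => sub_nonneg.2 (key j))).1 hzero
    ext j
    have hj := this j (Finset.mem_univ j)
    linarith [hj]
  have hanonneg : ∀ i, 0 ≤ a i := fun i => abs_nonneg _
  have hane : ∃ i, 0 < a i := by
    by_contra h
    push_neg at h
    apply hv0
    ext i
    exact abs_eq_zero.mp (le_antisymm (h i) (hanonneg i))
  -- Step 3: positivity via strong connectivity
  have step : ∀ p q : Fin m, M.transpose p q ≠ 0 → 0 < a q → 0 < a p := by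
    intro p q hpq hq
    have hle : M.transpose p q * a q ≤ M.transpose.mulVec a p := by
      have h' : ∀ r ∈ Finset.univ, (0:ℝ) ≤ M.transpose p r * a r :=
        fun r _ => mul_nonneg (hnonneg r p) (hanonneg r)
      exact Finset.single_le_sum h' (Finset.mem_univ q)
    rw [hafix] at hle
    have hpq' : 0 < M.transpose p q := lt_of_le_of_ne (hnonneg q p) (Ne.symm hpq)
    nlinarith
  have prop : ∀ i j : Fin m, Relation.TransGen (fun a b => M.transpose a b ≠ 0) i j →
      0 < a j → 0 < a i := by
    intro i j h
    induction h with
    | single h => exact step _ _ h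
    | tail _ h ih => exact fun hj => ih (step _ _ h hj)
  obtain ⟨i0, hi0⟩ := hane
  have hapos : ∀ i, 0 < a i := fun i => prop i i0 (hconn i i0) hi0
  -- Step 4: conclude
  refine ⟨a, hapos, ⟨?_, ?_⟩, ?_⟩
  · -- Hermitian
    unfold Matrix.IsHermitian
    rw [Matrix.conjTranspose_eq_transpose_of_trivial]
    rw [Matrix.transpose_sub, Matrix.transpose_mul, Matrix.transpose_mul,
      Matrix.transpose_transpose, Matrix.diagonal_transpose, Matrix.mul_assoc]
  · -- PSD quadratic form
    intro x
    have hexp : x ⬝ᵥ (Matrix.diagonal a - M.transpose * Matrix.diagonal a * M).mulVec x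
        = ∑ i, a i * x i ^ 2 - ∑ i, a i * (M.mulVec x i) ^ 2 := by
      rw [Matrix.sub_mulVec, dotProduct_sub]
      congr 1
      · simp [Matrix.mulVec_diagonal, dotProduct]
        ring_nf
        exact Finset.sum_congr rfl fun i _ => by ring
      · rw [Matrix.mul_assoc, ← Matrix.mulVec_mulVec, ← Matrix.mulVec_mulVec,
          Matrix.dotProduct_mulVec, Matrix.vecMul_transpose]
        simp [Matrix.mulVec_diagonal, dotProduct]
        exact Finset.sum_congr rfl fun i _ => by ring
    have hCS : ∀ i, (M.mulVec x i) ^ 2 ≤ ∑ j, M i j * x j ^ 2 := by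
      intro i
      have := Finset.sum_mul_sq_le_sq_mul_sq Finset.univ
        (fun j => Real.sqrt (M i j)) (fun j => Real.sqrt (M i j) * x j)
      have e1 : ∀ j, Real.sqrt (M i j) * (Real.sqrt (M i j) * x j) = M i j * x j := by
        intro j
        rw [← mul_assoc, Real.mul_self_sqrt (hnonneg i j)]
      have e2 : ∀ j, Real.sqrt (M i j) ^ 2 = M i j :=
        fun j => Real.sq_sqrt (hnonneg i j)
      simp only [e1] at this
      calc (M.mulVec x i) ^ 2 = (∑ j, M i j * x j) ^ 2 := rfl
        _ ≤ (∑ j, Real.sqrt (M i j) ^ 2) * ∑ j, (Real.sqrt (M i j) * x j) ^ 2 := this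
        _ = ∑ j, M i j * x j ^ 2 := by
            simp only [mul_pow, e2, hrow i, one_mul]
    have hbound : ∑ i, a i * (M.mulVec x i) ^ 2 ≤ ∑ i, a i * x i ^ 2 := by
      calc ∑ i, a i * (M.mulVec x i) ^ 2 ≤ ∑ i, a i * ∑ j, M i j * x j ^ 2 :=
            Finset.sum_le_sum fun i _ =>
              mul_le_mul_of_nonneg_left (hCS i) (hanonneg i)
        _ = ∑ j, (∑ i, M i j * a i) * x j ^ 2 := by
            simp only [Finset.mul_sum, Finset.sum_mul]
            rw [Finset.sum_comm]
            exact Finset.sum_congr rfl fun j _ => Finset.sum_congr rfl fun i _ => by ring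
        _ = ∑ j, a j * x j ^ 2 := by
            refine Finset.sum_congr rfl fun j _ => ?_
            have : (∑ i, M i j * a i) = a j := by
              have := congrFun hafix j
              simpa [Matrix.mulVec, dotProduct, Matrix.transpose_apply] using this
            rw [this]
    have : (0:ℝ) ≤ x ⬝ᵥ (Matrix.diagonal a - M.transpose * Matrix.diagonal a * M).mulVec x := by
      rw [hexp]; linarith
    simpa [Finsupp.sum_fintype, dotProduct, Matrix.mulVec, Finset.mul_sum, mul_assoc] using this
  · -- L 1 = 0
    have hM1 : M.mulVec (fun _ => 1) = (fun _ => 1) := by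
      ext i
      simp [Matrix.mulVec, dotProduct, hrow i]
    rw [Matrix.sub_mulVec, Matrix.mul_assoc, ← Matrix.mulVec_mulVec,
      ← Matrix.mulVec_mulVec, hM1]
    have hd : (Matrix.diagonal a).mulVec (fun _ => 1) = a := by
      ext i; simp [Matrix.mulVec_diagonal]
    rw [hd, hafix, sub_self]
end

section
/- Let M be an m×m irreducible row stochastic matrix with all diagonal entries positive, and let Π be the diagonal matrix whose diagonal is the (normalized) positive left Perron vector π of M (M'π = π). Then the kernel of L = Π − M'ΠM is one-dimensional, spanned by the all-ones vector. -/
/-- Lemma 1, second part: if in addition the diagonal entries of `M` are positive,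
then the kernel of `L = Π − MᵀΠM` is one-dimensional, spanned by the ones vector. -/
theorem stmt6 {m : ℕ} (M : Matrix (Fin m) (Fin m) ℝ)
    (hnonneg : ∀ i j, 0 ≤ M i j)
    (hrow : ∀ i, ∑ j, M i j = 1)
    (hconn : ∀ i j : Fin m, Relation.TransGen (fun a b => M a b ≠ 0) i j)
    (hdiag : ∀ i, 0 < M i i)
    (pi : Fin m → ℝ) (hpos : ∀ i, 0 < pi i) (hsum : ∑ i, pi i = 1)
    (hPerron : M.transpose.mulVec pi = pi)
    (L : Matrix (Fin m) (Fin m) ℝ)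
    (hL : L = Matrix.diagonal pi - M.transpose * Matrix.diagonal pi * M) :
    LinearMap.ker L.mulVecLin =
      Submodule.span ℝ {(fun _ => 1 : Fin m → ℝ)} := by
  subst hL
  have hPer : ∀ j, ∑ k, M k j * pi k = pi j := by
    intro j
    have := congrFun hPerron j
    simpa [Matrix.mulVec, dotProduct, Matrix.transpose, mul_comm] using this
  have hones : (Matrix.diagonal pi - M.transpose * Matrix.diagonal pi * M).mulVec
      (fun _ => 1) = 0 := by
    have h1 : M.mulVec (fun _ => 1) = fun _ => 1 := by
      funext i; simp [Matrix.mulVec, dotProduct, hrow i]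
    have h2 : (Matrix.diagonal pi).mulVec (fun _ => 1) = pi := by
      funext i; simp [Matrix.mulVec_diagonal]
    rw [Matrix.sub_mulVec, ← Matrix.mulVec_mulVec, ← Matrix.mulVec_mulVec, h1, h2, hPerron]
    simp
  ext x
  simp only [LinearMap.mem_ker, Matrix.mulVecLin_apply]
  constructor
  · intro hx
    set y := M.mulVec x with hy
    have hyk : ∀ k, ∑ j, M k j * x j = y k := by
      intro k; simp [hy, Matrix.mulVec, dotProduct]
    have hx' : ∀ i, pi i * x i = ∑ k, M k i * (pi k * y k) := by
      intro i
      have hd : (Matrix.diagonal pi).mulVec x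
          = (M.transpose * Matrix.diagonal pi * M).mulVec x := by
        have h := hx
        rw [Matrix.sub_mulVec, sub_eq_zero] at h
        exact h
      have := congrFun hd i
      rw [Matrix.mulVec_diagonal] at this
      rw [this, ← Matrix.mulVec_mulVec, ← Matrix.mulVec_mulVec]
      simp only [Matrix.mulVec, dotProduct, Matrix.transpose_apply, Matrix.diagonal_apply,
        ite_mul, zero_mul, Finset.sum_ite_eq, Finset.mem_univ, if_true]
      refine Finset.sum_congr rfl fun k _ => ?_
      rw [hyk k]
    have hB : ∑ i, pi i * x i ^ 2 = ∑ k, pi k * y k ^ 2 := by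
      calc ∑ i, pi i * x i ^ 2 = ∑ i, x i * (pi i * x i) := by
            exact Finset.sum_congr rfl fun i _ => by ring
        _ = ∑ i, x i * ∑ k, M k i * (pi k * y k) := by
            exact Finset.sum_congr rfl fun i _ => by rw [hx' i]
        _ = ∑ i, ∑ k, pi k * y k * (M k i * x i) := by
            refine Finset.sum_congr rfl fun i _ => ?_
            rw [Finset.mul_sum]
            exact Finset.sum_congr rfl fun k _ => by ring
        _ = ∑ k, ∑ i, pi k * y k * (M k i * x i) := Finset.sum_comm
        _ = ∑ k, pi k * y k * ∑ i, M k i * x i := by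
            exact Finset.sum_congr rfl fun k _ => (Finset.mul_sum _ _ _).symm
        _ = ∑ k, pi k * y k ^ 2 := by
            exact Finset.sum_congr rfl fun k _ => by rw [hyk k]; ring
    have hinner : ∀ k, ∑ j, M k j * (x j - y k) ^ 2 = (∑ j, M k j * x j ^ 2) - y k ^ 2 := by
      intro k
      have : ∑ j, M k j * (x j - y k) ^ 2
          = ∑ j, (M k j * x j ^ 2 - 2 * y k * (M k j * x j) + y k ^ 2 * M k j) := by
        exact Finset.sum_congr rfl fun j _ => by ring
      rw [this, Finset.sum_add_distrib, Finset.sum_sub_distrib, ← Finset.mul_sum,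
        ← Finset.mul_sum, hyk k, hrow k]
      ring
    have hsum0 : ∑ k, pi k * (∑ j, M k j * (x j - y k) ^ 2) = 0 := by
      have hswap : ∑ k, pi k * ∑ j, M k j * x j ^ 2 = ∑ j, pi j * x j ^ 2 := by
        calc ∑ k, pi k * ∑ j, M k j * x j ^ 2
            = ∑ k, ∑ j, x j ^ 2 * (M k j * pi k) := by
              refine Finset.sum_congr rfl fun k _ => ?_
              rw [Finset.mul_sum]; exact Finset.sum_congr rfl fun j _ => by ring
          _ = ∑ j, ∑ k, x j ^ 2 * (M k j * pi k) := Finset.sum_comm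
          _ = ∑ j, x j ^ 2 * ∑ k, M k j * pi k := by
              exact Finset.sum_congr rfl fun j _ => (Finset.mul_sum _ _ _).symm
          _ = ∑ j, pi j * x j ^ 2 := by
              exact Finset.sum_congr rfl fun j _ => by rw [hPer j]; ring
      calc ∑ k, pi k * (∑ j, M k j * (x j - y k) ^ 2)
          = ∑ k, (pi k * ∑ j, M k j * x j ^ 2 - pi k * y k ^ 2) := by
            exact Finset.sum_congr rfl fun k _ => by rw [hinner k]; ring
        _ = (∑ k, pi k * ∑ j, M k j * x j ^ 2) - ∑ k, pi k * y k ^ 2 :=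
            Finset.sum_sub_distrib _ _
        _ = 0 := by rw [hswap, hB]; ring
    have hterm : ∀ k, ∑ j, M k j * (x j - y k) ^ 2 = 0 := by
      intro k
      have hnn : ∀ k' ∈ Finset.univ, (0:ℝ) ≤ pi k' * (∑ j, M k' j * (x j - y k') ^ 2) := by
        intro k' _
        exact mul_nonneg (hpos k').le
          (Finset.sum_nonneg fun j _ => mul_nonneg (hnonneg k' j) (sq_nonneg _))
      have := (Finset.sum_eq_zero_iff_of_nonneg hnn).mp hsum0 k (Finset.mem_univ k)
      exact (mul_eq_zero.mp this).resolve_left (hpos k).ne'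
    have hkey : ∀ k j, M k j ≠ 0 → x j = y k := by
      intro k j hMkj
      have hnn : ∀ j' ∈ Finset.univ, (0:ℝ) ≤ M k j' * (x j' - y k) ^ 2 := fun j' _ =>
        mul_nonneg (hnonneg k j') (sq_nonneg _)
      have := (Finset.sum_eq_zero_iff_of_nonneg hnn).mp (hterm k) j (Finset.mem_univ j)
      have := (mul_eq_zero.mp this).resolve_left hMkj
      have := pow_eq_zero_iff (n := 2) (by norm_num) |>.mp this
      linarith [sub_eq_zero.mp this]
    have hstep : ∀ k j, M k j ≠ 0 → x j = x k := by
      intro k j h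
      rw [hkey k j h, ← hkey k k (hdiag k).ne']
    rcases Nat.eq_zero_or_pos m with hm | hm
    · have : x = 0 := funext fun i => absurd i.2 (by omega)
      rw [this]; exact Submodule.zero_mem _
    · set i0 : Fin m := ⟨0, hm⟩
      have hall : ∀ j, x j = x i0 := by
        intro j
        induction hconn i0 j with
        | single h => exact hstep _ _ h
        | tail _ h ih => rw [hstep _ _ h, ih]
      have hxc : x = (x i0) • (fun _ => 1 : Fin m → ℝ) := by
        funext j; simp [hall j]
      rw [hxc]
      exact Submodule.smul_mem _ _ (Submodule.mem_span_singleton_self _)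
  · intro hx
    rcases Submodule.mem_span_singleton.mp hx with ⟨a, rfl⟩
    rw [Matrix.mulVec_smul, hones, smul_zero]
end

section
/- If M is an m×m irreducible row stochastic matrix with positive diagonal entries and Π = diag(π) with M'π = π, π a positive probability vector, then the matrix I − L with L = Π − M'ΠM is a nonnegative irreducible matrix with row sums equal to 1 and spectral radius 1, and the eigenvalue 1 of I − L has geometric multiplicity one. -/
/-- For `M` irreducible row stochastic with positive diagonal and `Π = diag π`
with `Mᵀπ = π`, the matrix `I − L` (with `L = Π − MᵀΠM`) is nonnegative,
irreducible, has unit row sums, spectral radius `1`, and the eigenvalue `1`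
has geometric multiplicity one. -/
theorem stmt8 {m : ℕ} (M : Matrix (Fin m) (Fin m) ℝ)
    (hnonneg : ∀ i j, 0 ≤ M i j)
    (hrow : ∀ i, ∑ j, M i j = 1)
    (hconn : ∀ i j : Fin m, Relation.TransGen (fun a b => M a b ≠ 0) i j)
    (hdiag : ∀ i, 0 < M i i)
    (pi : Fin m → ℝ) (hpos : ∀ i, 0 < pi i) (hsum : ∑ i, pi i = 1)
    (hPerron : M.transpose.mulVec pi = pi)
    (L : Matrix (Fin m) (Fin m) ℝ)
    (hL : L = Matrix.diagonal pi - M.transpose * Matrix.diagonal pi * M) :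
    (∀ i j, 0 ≤ (1 - L) i j) ∧
    (∀ i j : Fin m, Relation.TransGen (fun a b => (1 - L) a b ≠ 0) i j) ∧
    (∀ i, ∑ j, (1 - L) i j = 1) ∧
    (∀ mu : ℂ, mu ∈ spectrum ℂ ((1 - L).map (algebraMap ℝ ℂ)) → ‖mu‖ ≤ 1) ∧
    (1 : ℂ) ∈ spectrum ℂ ((1 - L).map (algebraMap ℝ ℂ)) ∧
    Module.finrank ℝ (LinearMap.ker ((1 - L) - 1).mulVecLin) = 1 := by
  have hm : Nonempty (Fin m) := by
    rcases Nat.eq_zero_or_pos m with h | h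
    · subst h; simp at hsum
    · exact ⟨⟨0, h⟩⟩
  -- entrywise formula for A = 1 - L
  have hAentry : ∀ i j, (1 - L) i j
      = (if i = j then (1:ℝ) - pi i else 0) + ∑ k, M k i * (pi k * M k j) := by
    intro i j
    simp only [hL, Matrix.sub_apply, Matrix.one_apply, Matrix.diagonal_apply,
      Matrix.mul_apply, Matrix.mul_diagonal, Matrix.transpose_apply]
    by_cases h : i = j <;> simp [h, mul_assoc] <;> ring
  have hpile : ∀ i, pi i ≤ 1 := by
    intro i
    rw [← hsum]
    exact Finset.single_le_sum (fun j _ => (hpos j).le) (Finset.mem_univ i)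
  have hsum_nonneg : ∀ i j, 0 ≤ ∑ k, M k i * (pi k * M k j) := fun i j =>
    Finset.sum_nonneg fun k _ =>
      mul_nonneg (hnonneg k i) (mul_nonneg (hpos k).le (hnonneg k j))
  have hA0 : ∀ i j, 0 ≤ (1 - L) i j := by
    intro i j
    rw [hAentry]
    by_cases h : i = j
    · subst h
      rw [if_pos rfl]
      linarith [hsum_nonneg i i, hpile i]
    · simpa [h] using hsum_nonneg i j
  have hApos : ∀ i j, M i j ≠ 0 → 0 < (1 - L) i j := by
    intro i j hij
    have hMij : 0 < M i j := lt_of_le_of_ne (hnonneg i j) (Ne.symm hij)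
    have hterm : 0 < M i i * (pi i * M i j) := mul_pos (hdiag i) (mul_pos (hpos i) hMij)
    have hle : M i i * (pi i * M i j) ≤ ∑ k, M k i * (pi k * M k j) :=
      Finset.single_le_sum
        (fun k _ => mul_nonneg (hnonneg k i) (mul_nonneg (hpos k).le (hnonneg k j)))
        (Finset.mem_univ i)
    rw [hAentry]
    by_cases h : i = j
    · subst h; rw [if_pos rfl]; linarith [hpile i]
    · rw [if_neg h]; linarith
  have hP : ∀ i, ∑ k, M k i * pi k = pi i := by
    intro i
    have := congrFun hPerron i
    simpa [Matrix.mulVec, dotProduct, Matrix.transpose_apply] using this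
  have hArow : ∀ i, ∑ j, (1 - L) i j = 1 := by
    intro i
    calc ∑ j, (1 - L) i j
        = ∑ j, ((if i = j then (1:ℝ) - pi i else 0) + ∑ k, M k i * (pi k * M k j)) := by
          simp [hAentry]
      _ = (1 - pi i) + ∑ j, ∑ k, M k i * (pi k * M k j) := by
          rw [Finset.sum_add_distrib, Finset.sum_ite_eq Finset.univ i
            (fun _ => (1:ℝ) - pi i)]
          simp
      _ = (1 - pi i) + ∑ k, M k i * pi k * ∑ j, M k j := by
          rw [Finset.sum_comm]
          congr 1
          refine Finset.sum_congr rfl fun k _ => ?_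
          rw [Finset.mul_sum]
          refine Finset.sum_congr rfl fun j _ => by ring
      _ = 1 := by
          simp only [hrow, mul_one]
          rw [hP i]; ring
  -- irreducibility
  have hconnA : ∀ i j : Fin m, Relation.TransGen (fun a b => (1 - L) a b ≠ 0) i j :=
    fun i j => Relation.TransGen.mono (fun a b h => ne_of_gt (hApos a b h)) _ _ (hconn i j)
  -- fixed vectors of A are constant
  have hfix : ∀ v : Fin m → ℝ, (1 - L).mulVec v = v → ∀ i j, v i = v j := by
    intro v hv
    obtain ⟨i₀, -, hmax⟩ := Finset.exists_max_image Finset.univ v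
      ⟨Classical.arbitrary _, Finset.mem_univ _⟩
    have step : ∀ a b, v a = v i₀ → (1 - L) a b ≠ 0 → v b = v i₀ := by
      intro a b ha hab
      have hva : ∑ k, (1 - L) a k * v k = v a := congrFun hv a
      have hle : ∀ k ∈ Finset.univ, (1 - L) a k * v k ≤ (1 - L) a k * v i₀ :=
        fun k _ => mul_le_mul_of_nonneg_left (hmax k (Finset.mem_univ k)) (hA0 a k)
      have hsum' : ∑ k, (1 - L) a k * v k = ∑ k, (1 - L) a k * v i₀ := by
        rw [hva, ha, ← Finset.sum_mul, hArow a, one_mul]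
      have := (Finset.sum_eq_sum_iff_of_le hle).mp hsum' b (Finset.mem_univ b)
      exact mul_left_cancel₀ hab this
    have key : ∀ j, v j = v i₀ := by
      intro j
      have htg := hconnA i₀ j
      induction htg with
      | single h => exact step _ _ rfl h
      | tail _ h ih => exact step _ _ ih h
    intro i j; rw [key i, key j]
  refine ⟨hA0, hconnA, hArow, ?_, ?_, ?_⟩
  · -- spectral radius bound
    intro mu hmu
    rw [spectrum.mem_iff] at hmu
    have hdet : (algebraMap ℂ _ mu - (1 - L).map (algebraMap ℝ ℂ)).det = 0 := by
      by_contra h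
      exact hmu ((Matrix.isUnit_iff_isUnit_det _).mpr (isUnit_iff_ne_zero.mpr h))
    obtain ⟨v, hv0, hv⟩ := (Matrix.exists_mulVec_eq_zero_iff).mpr hdet
    have hev : ∀ i, mu * v i = ∑ j, ((1 - L) i j : ℂ) * v j := by
      intro i
      have h := congrFun hv i
      simp only [Matrix.mulVec, dotProduct, Matrix.sub_apply,
        Matrix.algebraMap_matrix_apply, Matrix.map_apply, Pi.zero_apply, sub_mul,
        Finset.sum_sub_distrib, sub_eq_zero, ite_mul, zero_mul,
        Finset.sum_ite_eq, Finset.mem_univ, if_pos] at h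
      exact h
    obtain ⟨i, -, hmax⟩ := Finset.exists_max_image Finset.univ (fun i => ‖v i‖)
      ⟨Classical.arbitrary _, Finset.mem_univ _⟩
    have hvi : 0 < ‖v i‖ := by
      rcases (norm_nonneg (v i)).lt_or_eq with h | h
      · exact h
      · exfalso; apply hv0; funext j
        have := hmax j (Finset.mem_univ j)
        rw [← h] at this
        simpa using le_antisymm this (norm_nonneg _)
    have hkey : ‖mu‖ * ‖v i‖ ≤ ‖v i‖ := by
      calc ‖mu‖ * ‖v i‖ = ‖mu * v i‖ := (norm_mul _ _).symm
        _ = ‖∑ j, ((1 - L) i j : ℂ) * v j‖ := by rw [hev i]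
        _ ≤ ∑ j, ‖((1 - L) i j : ℂ) * v j‖ := norm_sum_le _ _
        _ = ∑ j, (1 - L) i j * ‖v j‖ := by
            refine Finset.sum_congr rfl fun j _ => ?_
            rw [norm_mul, Complex.norm_real, Real.norm_of_nonneg (hA0 i j)]
        _ ≤ ∑ j, (1 - L) i j * ‖v i‖ := Finset.sum_le_sum fun j _ =>
            mul_le_mul_of_nonneg_left (hmax j (Finset.mem_univ j)) (hA0 i j)
        _ = ‖v i‖ := by rw [← Finset.sum_mul, hArow i, one_mul]
    exact le_of_mul_le_mul_right (by linarith) hvi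
  · -- 1 is in the spectrum
    rw [spectrum.mem_iff]
    intro hu
    rw [Matrix.isUnit_iff_isUnit_det, isUnit_iff_ne_zero] at hu
    apply hu
    rw [← Matrix.exists_mulVec_eq_zero_iff]
    refine ⟨fun _ => 1, ?_, ?_⟩
    · intro h
      obtain ⟨j⟩ := hm
      exact one_ne_zero (congrFun h j)
    · funext i
      have hc : ∑ j, ((1 - L) i j : ℂ) = 1 := by
        rw [← Complex.ofReal_sum]
        norm_cast
        exact hArow i
      simp only [Matrix.mulVec, dotProduct, Matrix.sub_apply,
        Matrix.algebraMap_matrix_apply, Matrix.map_apply, Pi.zero_apply, sub_mul,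
        Finset.sum_sub_distrib, ite_mul, zero_mul, mul_one, one_mul,
        Finset.sum_ite_eq, Finset.mem_univ, if_pos]
      simp only [← Matrix.sub_apply, Complex.coe_algebraMap, Algebra.algebraMap_self,
        RingHom.id_apply]
      rw [hc]
      ring
  · -- geometric multiplicity one
    obtain ⟨j₀⟩ := hm
    have hker : LinearMap.ker ((1 - L) - 1).mulVecLin
        = Submodule.span ℝ {fun _ => (1:ℝ)} := by
      apply le_antisymm
      · intro v hv
        rw [LinearMap.mem_ker, Matrix.mulVecLin_apply, Matrix.sub_mulVec,
          Matrix.one_mulVec, sub_eq_zero] at hv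
        have hc := hfix v hv
        have : v = (v j₀) • (fun _ => (1:ℝ)) := by
          funext i; simp [hc i j₀]
        rw [this]
        exact Submodule.smul_mem _ _ (Submodule.mem_span_singleton_self _)
      · rw [Submodule.span_le, Set.singleton_subset_iff]
        rw [SetLike.mem_coe, LinearMap.mem_ker, Matrix.mulVecLin_apply,
          Matrix.sub_mulVec, Matrix.one_mulVec, sub_eq_zero]
        funext i
        simp only [Matrix.mulVec, dotProduct, mul_one]
        exact hArow i
    rw [hker]
    refine finrank_span_singleton ?_
    intro h
    exact one_ne_zero (congrFun h j₀)
end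

section
/- Let S be an m×m irreducible row stochastic matrix with positive diagonal entries, S̄ = S ⊗ I_n, Π̄ = Π_S ⊗ I_n where Π_S = diag(π) with S'π = π, π a positive probability vector. Let V = blockdiag(V₁,…,V_m) where each V_i ∈ ℝ^{n×n_i} has orthonormal columns, and suppose ⋂_i col(V_i) = 0. Then with R = V'Π̄V and B = V'S̄V, R is positive definite and B'RB − R is negative definite; in particular, B is a discrete-time stability matrix (spectral radius less than 1). -/
open Matrix Finset

section Helpers

private lemma jensen_gap' {m : ℕ} (s z : Fin m → ℝ) (h1 : ∑ j, s j = 1) :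
    ∑ j, s j * (z j)^2 - (∑ j, s j * z j)^2
      = ∑ j, s j * (z j - ∑ k, s k * z k)^2 := by
  set c := ∑ k, s k * z k with hc
  have : ∀ j ∈ Finset.univ, s j * (z j - c)^2
      = s j * (z j)^2 - 2*c*(s j * z j) + c^2 * s j := fun j _ => by ring
  rw [Finset.sum_congr rfl this]
  rw [Finset.sum_add_distrib, Finset.sum_sub_distrib, ← Finset.mul_sum, ← Finset.mul_sum, h1]
  ring

private lemma proj_le' {n k : ℕ} (W : Matrix (Fin n) (Fin k) ℝ) (hW : Wᵀ * W = 1)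
    (u : Fin n → ℝ) :
    (W *ᵥ (Wᵀ *ᵥ u)) ⬝ᵥ (W *ᵥ (Wᵀ *ᵥ u)) ≤ u ⬝ᵥ u ∧
    ((W *ᵥ (Wᵀ *ᵥ u)) ⬝ᵥ (W *ᵥ (Wᵀ *ᵥ u)) = u ⬝ᵥ u → W *ᵥ (Wᵀ *ᵥ u) = u) := by
  set p := W *ᵥ (Wᵀ *ᵥ u) with hp
  have key : p ⬝ᵥ p = u ⬝ᵥ p := by
    have h1 : p ⬝ᵥ p = (Wᵀ *ᵥ u) ⬝ᵥ ((Wᵀ * W) *ᵥ (Wᵀ *ᵥ u)) := by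
      rw [hp, Matrix.dotProduct_mulVec, ← Matrix.vecMul_transpose, Matrix.mulVec_mulVec,
        Matrix.vecMul_vecMul, ← Matrix.dotProduct_mulVec, Matrix.mulVec_mulVec]
    have h2 : u ⬝ᵥ p = (Wᵀ *ᵥ u) ⬝ᵥ (Wᵀ *ᵥ u) := by
      rw [hp, Matrix.dotProduct_mulVec, ← Matrix.mulVec_transpose]
    rw [h1, h2, hW, Matrix.one_mulVec]
  have gap : (u - p) ⬝ᵥ (u - p) = u ⬝ᵥ u - p ⬝ᵥ p := by
    rw [sub_dotProduct, dotProduct_sub, dotProduct_sub,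
      dotProduct_comm p u, ← key]
    ring
  have hnn : 0 ≤ (u - p) ⬝ᵥ (u - p) :=
    Finset.sum_nonneg fun i _ => mul_self_nonneg _
  constructor
  · linarith [gap, hnn]
  · intro h
    have h0 : (u - p) ⬝ᵥ (u - p) = 0 := by rw [gap, h]; ring
    have h1 := dotProduct_self_eq_zero.mp h0
    exact (sub_eq_zero.mp h1).symm

private lemma exists_eigvec' {ι : Type*} [Fintype ι] [DecidableEq ι] (M : Matrix ι ι ℂ) (μ : ℂ)
    (h : μ ∈ spectrum ℂ M) : ∃ v : ι → ℂ, v ≠ 0 ∧ M *ᵥ v = μ • v := by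
  rw [← AlgEquiv.spectrum_eq (Matrix.toLinAlgEquiv' : Matrix ι ι ℂ ≃ₐ[ℂ] _) M,
    ← Module.End.hasEigenvalue_iff_mem_spectrum] at h
  obtain ⟨v, hv⟩ := h.exists_hasEigenvector
  refine ⟨v, hv.2, ?_⟩
  have h2 := hv.apply_eq_smul
  simpa [Matrix.toLinAlgEquiv'_apply, Matrix.toLin'_apply] using h2

private lemma re_dot' {ι : Type*} [Fintype ι] (G : Matrix ι ι ℝ) (v : ι → ℂ) :
    (star v ⬝ᵥ (G.map (algebraMap ℝ ℂ)) *ᵥ v).re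
      = (fun p => (v p).re) ⬝ᵥ G *ᵥ (fun p => (v p).re)
        + (fun p => (v p).im) ⬝ᵥ G *ᵥ (fun p => (v p).im) := by
  simp only [dotProduct, mulVec, Matrix.map_apply, Pi.star_apply]
  rw [Complex.re_sum, ← Finset.sum_add_distrib]
  apply Finset.sum_congr rfl; intro p _
  rw [Finset.mul_sum, Complex.re_sum, Finset.mul_sum, Finset.mul_sum, ← Finset.sum_add_distrib]
  apply Finset.sum_congr rfl; intro q _
  simp only [Complex.mul_re, Complex.mul_im, Complex.conj_re, Complex.conj_im,
    RCLike.star_def, Complex.coe_algebraMap, Complex.ofReal_re, Complex.ofReal_im]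
  ring

private lemma star_real_vec' {ι : Type*} [Fintype ι] (B : Matrix ι ι ℝ) (v : ι → ℂ) :
    (B.map (algebraMap ℝ ℂ)) *ᵥ star v = star ((B.map (algebraMap ℝ ℂ)) *ᵥ v) := by
  funext p
  simp only [Matrix.mulVec, dotProduct, Pi.star_apply, Matrix.map_apply, RCLike.star_def,
    map_sum, Complex.coe_algebraMap]
  refine Finset.sum_congr rfl fun q _ => ?_
  rw [_root_.map_mul, Complex.conj_ofReal]

private lemma lyap_spec' {ι : Type*} [Fintype ι] [DecidableEq ι] (R B : Matrix ι ι ℝ)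
    (hR : R.PosDef) (hG : (R - Bᵀ * R * B).PosDef) :
    ∀ mu : ℂ, mu ∈ spectrum ℂ (B.map (algebraMap ℝ ℂ)) → ‖mu‖ < 1 := by
  intro μ hμ
  obtain ⟨v, hv0, hv⟩ := exists_eigvec' _ μ hμ
  have repos : ∀ (G : Matrix ι ι ℝ), G.PosDef →
      0 < (star v ⬝ᵥ (G.map (algebraMap ℝ ℂ)) *ᵥ v).re := by
    intro G hGp
    rw [re_dot']
    have hstar : ∀ x : ι → ℝ, star x = x := fun x => funext fun p => star_trivial _
    by_cases ha : (fun p => (v p).re) = 0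
    · have hb : (fun p => (v p).im) ≠ 0 := by
        intro hb
        apply hv0
        funext p
        have h1 := congrFun ha p
        have h2 := congrFun hb p
        simp only [Pi.zero_apply] at h1 h2
        exact Complex.ext h1 h2
      have := hGp.dotProduct_mulVec_pos hb
      rw [hstar] at this
      rw [ha]
      simpa using this
    · have h1 := hGp.dotProduct_mulVec_pos ha
      rw [hstar] at h1
      have h2 := hGp.posSemidef.dotProduct_mulVec_nonneg (fun p => (v p).im)
      rw [hstar] at h2
      linarith
  have hBv : (B.map (algebraMap ℝ ℂ)) *ᵥ v = μ • v := hv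
  have hmap : ((R - Bᵀ * R * B).map (algebraMap ℝ ℂ))
      = R.map (algebraMap ℝ ℂ)
        - (B.map (algebraMap ℝ ℂ))ᵀ * R.map (algebraMap ℝ ℂ) * B.map (algebraMap ℝ ℂ) := by
    rw [Matrix.map_sub _ (fun a b => by simp), Matrix.map_mul, Matrix.map_mul,
      Matrix.transpose_map]
  set Rc := R.map (algebraMap ℝ ℂ)
  set Bc := B.map (algebraMap ℝ ℂ)
  have key : star v ⬝ᵥ ((R - Bᵀ * R * B).map (algebraMap ℝ ℂ)) *ᵥ v
      = (((1 - ‖μ‖^2 : ℝ)) : ℂ) * (star v ⬝ᵥ Rc *ᵥ v) := by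
    rw [hmap, Matrix.sub_mulVec, dotProduct_sub]
    have h2 : star v ⬝ᵥ (Bcᵀ * Rc * Bc) *ᵥ v
        = ((‖μ‖^2 : ℝ) : ℂ) * (star v ⬝ᵥ Rc *ᵥ v) := by
      rw [← Matrix.mulVec_mulVec, ← Matrix.mulVec_mulVec, Matrix.dotProduct_mulVec,
        Matrix.vecMul_transpose, star_real_vec', hBv]
      rw [star_smul, Matrix.mulVec_smul, smul_dotProduct, dotProduct_smul]
      rw [smul_eq_mul, smul_eq_mul, ← mul_assoc]
      congr 1
      rw [RCLike.star_def, mul_comm, Complex.mul_conj, Complex.normSq_eq_norm_sq]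
    rw [h2]
    push_cast
    ring
  have hreG := repos _ hG
  have hreR := repos _ hR
  rw [key] at hreG
  have : ((((1 - ‖μ‖^2 : ℝ)) : ℂ) * (star v ⬝ᵥ Rc *ᵥ v)).re
      = (1 - ‖μ‖^2) * (star v ⬝ᵥ Rc *ᵥ v).re := by
    rw [Complex.mul_re, Complex.ofReal_re, Complex.ofReal_im]
    ring
  rw [this] at hreG
  have h12 : 0 < 1 - ‖μ‖^2 := by nlinarith [hreR]
  nlinarith [norm_nonneg μ, h12]

end Helpers

/-- Proposition 1: with `S` irreducible row stochastic with positive diagonal,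
`S̄ = S ⊗ Iₙ`, `Π̄ = Π_S ⊗ Iₙ`, and `V = blockdiag(V₁,…,V_m)` with orthonormal
columns and trivially intersecting column spaces, the matrix `R = VᵀΠ̄V` is
positive definite, `BᵀRB − R` is negative definite for `B = VᵀS̄V`, and `B` has
spectral radius less than one. -/
theorem stmt13 {m n : ℕ} {nd : Fin m → ℕ}
    (S : Matrix (Fin m) (Fin m) ℝ)
    (hnonneg : ∀ i j, 0 ≤ S i j)
    (hrow : ∀ i, ∑ j, S i j = 1)
    (hconn : ∀ i j : Fin m, Relation.TransGen (fun a b => S a b ≠ 0) i j)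
    (hdiag : ∀ i, 0 < S i i)
    (pi : Fin m → ℝ) (hpos : ∀ i, 0 < pi i) (hsum : ∑ i, pi i = 1)
    (hPerron : S.transpose.mulVec pi = pi)
    (Sbar Pibar : Matrix (Fin m × Fin n) (Fin m × Fin n) ℝ)
    (hSbar : Sbar = Matrix.kroneckerMap (· * ·) S (1 : Matrix (Fin n) (Fin n) ℝ))
    (hPibar : Pibar = Matrix.kroneckerMap (· * ·) (Matrix.diagonal pi)
      (1 : Matrix (Fin n) (Fin n) ℝ))
    (Vblk : ∀ i : Fin m, Matrix (Fin n) (Fin (nd i)) ℝ)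
    (horth : ∀ i, (Vblk i).transpose * Vblk i = 1)
    (hjoint : (⨅ i : Fin m, LinearMap.range (Vblk i).mulVecLin) = ⊥)
    (V : Matrix (Fin m × Fin n) (Σ i : Fin m, Fin (nd i)) ℝ)
    (hV : ∀ p c, V p c = if h : p.1 = c.1 then Vblk c.1 p.2 c.2 else 0)
    (R B : Matrix (Σ i : Fin m, Fin (nd i)) (Σ i : Fin m, Fin (nd i)) ℝ)
    (hR : R = V.transpose * Pibar * V)
    (hB : B = V.transpose * Sbar * V) :
    R.PosDef ∧ (R - B.transpose * R * B).PosDef ∧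
    ∀ mu : ℂ, mu ∈ spectrum ℂ (B.map (algebraMap ℝ ℂ)) → ‖mu‖ < 1 := by
  classical
  -- basic structural facts
  have hPibar' : Pibar = Matrix.diagonal (fun p : Fin m × Fin n => pi p.1) := by
    rw [hPibar]
    ext ⟨i, a⟩ ⟨j, b⟩
    by_cases h : i = j
    · subst h
      by_cases h2 : a = b
      · subst h2; simp [Matrix.kroneckerMap, Matrix.diagonal, Matrix.one_apply]
      · simp [Matrix.kroneckerMap, Matrix.diagonal, Matrix.one_apply, h2, Prod.ext_iff]
    · simp [Matrix.kroneckerMap, Matrix.diagonal, Matrix.one_apply, h, Prod.ext_iff]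
  have hstat : ∀ j, ∑ i, S i j * pi i = pi j := by
    intro j
    have := congrFun hPerron j
    simpa [Matrix.mulVec, dotProduct, Matrix.transpose_apply] using this
  have hVmul : ∀ (u : (Σ i : Fin m, Fin (nd i)) → ℝ) (i : Fin m) (a : Fin n),
      (V *ᵥ u) (i, a) = ∑ c : Fin (nd i), Vblk i a c * u ⟨i, c⟩ := by
    intro u i a
    simp only [Matrix.mulVec, dotProduct, hV]
    rw [← Finset.univ_sigma_univ, Finset.sum_sigma]
    rw [Fintype.sum_eq_single i]
    · simp
    · intro k hk
      apply Finset.sum_eq_zero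
      intro c _
      rw [dif_neg (by simpa using (Ne.symm hk)), zero_mul]
  have hVtmul : ∀ (w : Fin m × Fin n → ℝ) (i : Fin m) (c : Fin (nd i)),
      (Vᵀ *ᵥ w) ⟨i, c⟩ = ∑ a : Fin n, Vblk i a c * w (i, a) := by
    intro w i c
    simp only [Matrix.mulVec, dotProduct, Matrix.transpose_apply, hV]
    rw [Fintype.sum_prod_type]
    rw [Fintype.sum_eq_single i]
    · simp
    · intro k hk
      apply Finset.sum_eq_zero
      intro a _
      rw [dif_neg (by simpa using hk), zero_mul]
  have hVtV : Vᵀ * V = 1 := by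
    ext ⟨i, d⟩ ⟨j, d'⟩
    simp only [Matrix.mul_apply, Matrix.transpose_apply, hV]
    rw [Fintype.sum_prod_type]
    by_cases h : i = j
    · subst h
      rw [Fintype.sum_eq_single i]
      · have := congrFun (congrFun (horth i) d) d'
        simp only [Matrix.mul_apply, Matrix.transpose_apply] at this
        simp only [dif_pos rfl, dite_true]
        rw [this]
        by_cases h2 : d = d'
        · subst h2; simp [Matrix.one_apply]
        · simp [Matrix.one_apply, h2, Sigma.mk.inj_iff]
      · intro k hk
        apply Finset.sum_eq_zero
        intro a _
        rw [dif_neg (by simpa using hk), zero_mul]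
    · rw [Finset.sum_eq_zero]
      · simp [Matrix.one_apply, Sigma.mk.inj_iff, h]
      · intro k _
        apply Finset.sum_eq_zero
        intro a _
        by_cases hk : k = i
        · rw [dif_neg (by simp [hk, h] : ¬((k, a).1 = j)), mul_zero]
        · rw [dif_neg (by simpa using hk), zero_mul]
  have hSmul : ∀ (y : Fin m × Fin n → ℝ) (i : Fin m) (a : Fin n),
      (Sbar *ᵥ y) (i, a) = ∑ j, S i j * y (j, a) := by
    intro y i a
    rw [hSbar]
    simp only [Matrix.mulVec, dotProduct, Matrix.kroneckerMap_apply]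
    rw [Fintype.sum_prod_type]
    apply Finset.sum_congr rfl
    intro j _
    rw [Fintype.sum_eq_single a]
    · simp
    · intro b hb
      simp [Matrix.one_apply, (Ne.symm hb)]
  -- quadratic forms
  have hQR : ∀ u : (Σ i : Fin m, Fin (nd i)) → ℝ,
      u ⬝ᵥ R *ᵥ u = ∑ p : Fin m × Fin n, pi p.1 * ((V *ᵥ u) p)^2 := by
    intro u
    rw [hR, ← Matrix.mulVec_mulVec, ← Matrix.mulVec_mulVec, Matrix.dotProduct_mulVec,
      Matrix.vecMul_transpose, hPibar']
    simp only [dotProduct, Matrix.mulVec_diagonal]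
    exact Finset.sum_congr rfl fun p _ => by ring
  have hQsub : ∀ x : (Σ i : Fin m, Fin (nd i)) → ℝ,
      x ⬝ᵥ ((R - Bᵀ * R * B) *ᵥ x)
        = x ⬝ᵥ (R *ᵥ x) - (B *ᵥ x) ⬝ᵥ (R *ᵥ (B *ᵥ x)) := by
    intro x
    rw [Matrix.sub_mulVec, dotProduct_sub]
    congr 1
    rw [← Matrix.mulVec_mulVec, ← Matrix.mulVec_mulVec, Matrix.dotProduct_mulVec,
      Matrix.vecMul_transpose]
  have hBV : ∀ x : (Σ i : Fin m, Fin (nd i)) → ℝ,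
      V *ᵥ (B *ᵥ x) = V *ᵥ (Vᵀ *ᵥ (Sbar *ᵥ (V *ᵥ x))) := by
    intro x
    rw [hB, ← Matrix.mulVec_mulVec, ← Matrix.mulVec_mulVec]
  -- hermitian facts
  have hRsymm : Rᵀ = R := by
    rw [hR, Matrix.transpose_mul, Matrix.transpose_mul, Matrix.transpose_transpose,
      hPibar', Matrix.diagonal_transpose, Matrix.mul_assoc]
  have hRherm : R.IsHermitian := by
    show Rᴴ = R
    rw [Matrix.conjTranspose_eq_transpose_of_trivial]
    exact hRsymm
  have hGherm : (R - Bᵀ * R * B).IsHermitian := by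
    show (R - Bᵀ * R * B)ᴴ = R - Bᵀ * R * B
    rw [Matrix.conjTranspose_eq_transpose_of_trivial, Matrix.transpose_sub,
      Matrix.transpose_mul, Matrix.transpose_mul, Matrix.transpose_transpose, hRsymm,
      Matrix.mul_assoc]
  have hstarid : ∀ x : (Σ i : Fin m, Fin (nd i)) → ℝ, star x = x :=
    fun x => funext fun p => star_trivial _
  -- injectivity of V
  have hVinj : ∀ x : (Σ i : Fin m, Fin (nd i)) → ℝ, V *ᵥ x = 0 → x = 0 := by
    intro x hx
    have : x = (Vᵀ * V) *ᵥ x := by rw [hVtV, Matrix.one_mulVec]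
    rw [this, ← Matrix.mulVec_mulVec, hx, Matrix.mulVec_zero]
  -- R is positive definite
  have hRpd : R.PosDef := by
    refine Matrix.PosDef.of_dotProduct_mulVec_pos hRherm fun x hx => ?_
    rw [hstarid, hQR]
    have hy : V *ᵥ x ≠ 0 := fun h => hx (hVinj x h)
    obtain ⟨p, hp⟩ := Function.ne_iff.mp hy
    refine Finset.sum_pos' (fun q _ => mul_nonneg (hpos q.1).le (sq_nonneg _)) ⟨p, mem_univ p, ?_⟩
    exact mul_pos (hpos p.1) (pow_two_pos_of_ne_zero hp)
  -- the Lyapunov gap is positive definite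
  have hGpd : (R - Bᵀ * R * B).PosDef := by
    refine Matrix.PosDef.of_dotProduct_mulVec_pos hGherm fun x hx => ?_
    rw [hstarid]
    set y := V *ᵥ x with hy
    set w := Sbar *ᵥ y with hw
    set pw := V *ᵥ (Vᵀ *ᵥ w) with hpw
    have hform : x ⬝ᵥ ((R - Bᵀ * R * B) *ᵥ x)
        = (∑ p : Fin m × Fin n, pi p.1 * (y p)^2)
          - (∑ p : Fin m × Fin n, pi p.1 * (pw p)^2) := by
      rw [hQsub, hQR, hQR (B *ᵥ x), hBV]
    -- Jensen step
    have hwya : ∀ i a, w (i, a) = ∑ j, S i j * y (j, a) := fun i a => hSmul y i a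
    have jensen : (∑ p : Fin m × Fin n, pi p.1 * (y p)^2)
        - (∑ p : Fin m × Fin n, pi p.1 * (w p)^2)
        = ∑ a : Fin n, ∑ i, pi i * (∑ j, S i j * (y (j, a) - w (i, a))^2) := by
      rw [Fintype.sum_prod_type, Fintype.sum_prod_type]
      rw [Finset.sum_comm (γ := Fin m) (α := Fin n), Finset.sum_comm (γ := Fin m) (α := Fin n)]
      rw [← Finset.sum_sub_distrib]
      apply Finset.sum_congr rfl
      intro a _
      have step1 : ∑ i, pi i * (y (i, a))^2 = ∑ i, pi i * ∑ j, S i j * (y (j, a))^2 :=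
        calc ∑ i, pi i * (y (i, a))^2
            = ∑ j, (∑ i, S i j * pi i) * (y (j, a))^2 := by
              apply Finset.sum_congr rfl; intro j _; rw [hstat]
          _ = ∑ j, ∑ i, pi i * (S i j * (y (j, a))^2) := by
              apply Finset.sum_congr rfl; intro j _
              rw [Finset.sum_mul]
              apply Finset.sum_congr rfl; intro i _; ring
          _ = ∑ i, ∑ j, pi i * (S i j * (y (j, a))^2) := Finset.sum_comm
          _ = ∑ i, pi i * ∑ j, S i j * (y (j, a))^2 := by
              apply Finset.sum_congr rfl; intro i _; rw [Finset.mul_sum]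
      rw [step1, ← Finset.sum_sub_distrib]
      apply Finset.sum_congr rfl
      intro i _
      rw [hwya i a, ← mul_sub, jensen_gap' (S i) (fun j => y (j, a)) (hrow i)]
    -- projection step
    have hpwblock : ∀ i a,
        pw (i, a) = (Vblk i *ᵥ ((Vblk i)ᵀ *ᵥ (fun b => w (i, b)))) a := by
      intro i a
      rw [hpw, hVmul]
      have e : ∀ c ∈ Finset.univ, Vblk i a c * (Vᵀ *ᵥ w) ⟨i, c⟩
          = Vblk i a c * ∑ b, Vblk i b c * w (i, b) := fun c _ => by rw [hVtmul]
      rw [Finset.sum_congr rfl e]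
      simp only [Matrix.mulVec, dotProduct, Matrix.transpose_apply]
    have projblock : ∀ i,
        (∑ a, (pw (i, a))^2) ≤ (∑ a, (w (i, a))^2) ∧
        ((∑ a, (pw (i, a))^2) = (∑ a, (w (i, a))^2) →
          Vblk i *ᵥ ((Vblk i)ᵀ *ᵥ (fun b => w (i, b))) = fun b => w (i, b)) := by
      intro i
      obtain ⟨hle, heq⟩ := proj_le' (Vblk i) (horth i) (fun b => w (i, b))
      have e1 : (∑ a, (pw (i, a))^2)
          = (Vblk i *ᵥ ((Vblk i)ᵀ *ᵥ (fun b => w (i, b)))) ⬝ᵥ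
            (Vblk i *ᵥ ((Vblk i)ᵀ *ᵥ (fun b => w (i, b)))) := by
        simp only [dotProduct, hpwblock]
        exact Finset.sum_congr rfl fun a _ => by ring
      have e2 : (∑ a, (w (i, a))^2) = (fun b => w (i, b)) ⬝ᵥ (fun b => w (i, b)) := by
        simp only [dotProduct]
        exact Finset.sum_congr rfl fun a _ => by ring
      constructor
      · rw [e1, e2]; exact hle
      · intro h; exact heq (by rw [← e1, ← e2, h])
    have projid : (∑ p : Fin m × Fin n, pi p.1 * (w p)^2)
        - (∑ p : Fin m × Fin n, pi p.1 * (pw p)^2)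
        = ∑ i, pi i * ((∑ a, (w (i, a))^2) - ∑ a, (pw (i, a))^2) := by
      rw [Fintype.sum_prod_type, Fintype.sum_prod_type, ← Finset.sum_sub_distrib]
      apply Finset.sum_congr rfl
      intro i _
      show (∑ a, pi i * (w (i, a))^2) - (∑ a, pi i * (pw (i, a))^2) = _
      rw [← Finset.mul_sum, ← Finset.mul_sum, ← mul_sub]
    -- nonnegativity of both gaps
    have jnonneg : 0 ≤ ∑ a : Fin n, ∑ i, pi i * (∑ j, S i j * (y (j, a) - w (i, a))^2) :=
      Finset.sum_nonneg fun a _ => Finset.sum_nonneg fun i _ =>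
        mul_nonneg (hpos i).le (Finset.sum_nonneg fun j _ =>
          mul_nonneg (hnonneg i j) (sq_nonneg _))
    have pnonneg : 0 ≤ ∑ i, pi i * ((∑ a, (w (i, a))^2) - ∑ a, (pw (i, a))^2) :=
      Finset.sum_nonneg fun i _ => mul_nonneg (hpos i).le (by linarith [(projblock i).1])
    -- positivity by contradiction
    by_contra hng
    push_neg at hng
    have hAy_le : (∑ p : Fin m × Fin n, pi p.1 * (y p)^2)
        ≤ (∑ p : Fin m × Fin n, pi p.1 * (pw p)^2) := by
      rw [hform] at hng; linarith
    have hwy : (∑ p : Fin m × Fin n, pi p.1 * (w p)^2)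
        = (∑ p : Fin m × Fin n, pi p.1 * (y p)^2) := by linarith [jensen ▸ jnonneg, projid ▸ pnonneg]
    have hpww : (∑ p : Fin m × Fin n, pi p.1 * (pw p)^2)
        = (∑ p : Fin m × Fin n, pi p.1 * (w p)^2) := by linarith [jensen ▸ jnonneg, projid ▸ pnonneg]
    -- equality in Jensen: y is "S-locally constant"
    have jzero : (∑ a : Fin n, ∑ i, pi i * (∑ j, S i j * (y (j, a) - w (i, a))^2)) = 0 := by
      rw [← jensen]; linarith
    have key0 : ∀ a i j, S i j ≠ 0 → y (j, a) = w (i, a) := by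
      intro a i j hij
      have h1 := (Finset.sum_eq_zero_iff_of_nonneg (fun a _ => Finset.sum_nonneg fun i _ =>
        mul_nonneg (hpos i).le (Finset.sum_nonneg fun j _ =>
          mul_nonneg (hnonneg i j) (sq_nonneg _)))).mp jzero a (mem_univ a)
      have h2 := (Finset.sum_eq_zero_iff_of_nonneg (fun i _ =>
        mul_nonneg (hpos i).le (Finset.sum_nonneg fun j _ =>
          mul_nonneg (hnonneg i j) (sq_nonneg _)))).mp h1 i (mem_univ i)
      have h3 : (∑ j, S i j * (y (j, a) - w (i, a))^2) = 0 := by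
        rcases mul_eq_zero.mp h2 with h | h
        · exact absurd h (hpos i).ne'
        · exact h
      have h4 := (Finset.sum_eq_zero_iff_of_nonneg (fun j _ =>
        mul_nonneg (hnonneg i j) (sq_nonneg _))).mp h3 j (mem_univ j)
      rcases mul_eq_zero.mp h4 with h | h
      · exact absurd h hij
      · have := pow_eq_zero_iff (n := 2) (by norm_num) |>.mp h
        linarith [sub_eq_zero.mp this]
    have hstep : ∀ i j, S i j ≠ 0 → ∀ a, y (i, a) = y (j, a) := by
      intro i j hij a
      rw [key0 a i j hij, key0 a i i (hdiag i).ne']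
    have hconst : ∀ i j : Fin m, ∀ a, y (i, a) = y (j, a) := by
      intro i j
      have : ∀ {j'}, Relation.TransGen (fun a b => S a b ≠ 0) i j' →
          ∀ a, y (i, a) = y (j', a) := by
        intro j' h
        induction h with
        | single h => exact hstep _ _ h
        | tail _ h ih => intro a; rw [ih a]; exact hstep _ _ h a
      exact this (hconn i j)
    -- w agrees with y
    have hwyeq : ∀ i a, w (i, a) = y (i, a) := by
      intro i a
      rw [hwya i a]
      have : ∀ j ∈ Finset.univ, S i j * y (j, a) = S i j * y (i, a) := by
        intro j _
        rw [(hconst i j a).symm]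
      rw [Finset.sum_congr rfl this, ← Finset.sum_mul, hrow i, one_mul]
    -- equality in projection
    have pzero : (∑ i, pi i * ((∑ a, (w (i, a))^2) - ∑ a, (pw (i, a))^2)) = 0 := by
      rw [← projid]; linarith
    have projeq : ∀ i, Vblk i *ᵥ ((Vblk i)ᵀ *ᵥ (fun b => w (i, b))) = fun b => w (i, b) := by
      intro i
      have h1 := (Finset.sum_eq_zero_iff_of_nonneg (fun i _ =>
        mul_nonneg (hpos i).le (by linarith [(projblock i).1]))).mp pzero i (mem_univ i)
      have h2 : (∑ a, (w (i, a))^2) - (∑ a, (pw (i, a))^2) = 0 := by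
        rcases mul_eq_zero.mp h1 with h | h
        · exact absurd h (hpos i).ne'
        · exact h
      exact (projblock i).2 (by linarith)
    -- the common value lies in every column space, hence is zero
    have hm : Nonempty (Fin m) := by
      by_contra h
      rw [not_nonempty_iff] at h
      rw [Finset.univ_eq_empty, Finset.sum_empty] at hsum
      norm_num at hsum
    obtain ⟨i0⟩ := hm
    set u : Fin n → ℝ := fun a => y (i0, a) with hu
    have humem : u ∈ (⨅ i : Fin m, LinearMap.range (Vblk i).mulVecLin) := by
      rw [Submodule.mem_iInf]
      intro i
      refine ⟨(Vblk i)ᵀ *ᵥ (fun b => w (i, b)), ?_⟩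
      rw [Matrix.mulVecLin_apply, projeq i]
      funext a
      rw [hwyeq i a, hu]
      exact (hconst i i0 a)
    rw [hjoint, Submodule.mem_bot] at humem
    have hyzero : y = 0 := by
      funext p
      obtain ⟨i, a⟩ := p
      have h1 : y (i, a) = u a := (hconst i i0 a)
      rw [h1, humem]
      rfl
    exact hx (hVinj x hyzero)
  exact ⟨hRpd, hGpd, lyap_spec' R B hRpd hGpd⟩
end

section
/- Under the assumptions of the previous statement, the matrix V' L̄ V is positive definite, where L̄ = L ⊗ I_n and L = Π_S − S'Π_S S. -/
open Matrix

private lemma stmt14_sum_zero {ι : Type*} [Fintype ι] {f : ι → ℝ}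
    (h0 : ∀ i, 0 ≤ f i) (h : ∑ i, f i = 0) (i : ι) : f i = 0 :=
  (Finset.sum_eq_zero_iff_of_nonneg (fun j _ => h0 j)).mp h i (Finset.mem_univ i)

private lemma stmt14_swap3 {ι₁ ι₂ ι₃ : Type*} [Fintype ι₁] [Fintype ι₂] [Fintype ι₃]
    (f : ι₁ → ι₂ → ι₃ → ℝ) :
    ∑ a, ∑ b, ∑ c, f a b c = ∑ c, ∑ b, ∑ a, f a b c := by
  calc ∑ a, ∑ b, ∑ c, f a b c
      = ∑ a, ∑ c, ∑ b, f a b c :=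
        Finset.sum_congr rfl fun a _ => Finset.sum_comm
    _ = ∑ c, ∑ a, ∑ b, f a b c := Finset.sum_comm
    _ = ∑ c, ∑ b, ∑ a, f a b c :=
        Finset.sum_congr rfl fun c _ => Finset.sum_comm

private lemma stmt14_swap4 {ι₁ ι₂ ι₃ ι₄ : Type*} [Fintype ι₁] [Fintype ι₂] [Fintype ι₃]
    [Fintype ι₄] (f : ι₁ → ι₂ → ι₃ → ι₄ → ℝ) :
    ∑ a, ∑ b, ∑ c, ∑ d, f a b c d = ∑ d, ∑ b, ∑ a, ∑ c, f a b c d := by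
  calc ∑ a, ∑ b, ∑ c, ∑ d, f a b c d
      = ∑ a, ∑ b, ∑ d, ∑ c, f a b c d :=
        Finset.sum_congr rfl fun a _ => Finset.sum_congr rfl fun b _ =>
          Finset.sum_comm
    _ = ∑ d, ∑ b, ∑ a, ∑ c, f a b c d := stmt14_swap3 _

private lemma stmt14_key {m n : ℕ} (S : Matrix (Fin m) (Fin m) ℝ) (pi : Fin m → ℝ)
    (hrow : ∀ i, ∑ j, S i j = 1)
    (hstat : ∀ j, ∑ i, S i j * pi i = pi j)
    (y : Fin m × Fin n → ℝ) :
    2 * (y ⬝ᵥ (Matrix.kroneckerMap (· * ·)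
        (Matrix.diagonal pi - S.transpose * Matrix.diagonal pi * S)
        (1 : Matrix (Fin n) (Fin n) ℝ)) *ᵥ y)
      = ∑ i, ∑ α, ∑ j, ∑ k,
          pi i * S i j * S i k * (y (j, α) - y (k, α)) ^ 2 := by
  have hM : ∀ j k : Fin m,
      (Matrix.diagonal pi - S.transpose * Matrix.diagonal pi * S) j k
        = (if j = k then pi j else 0) - ∑ i, S i j * pi i * S i k := by
    intro j k
    simp [Matrix.sub_apply, Matrix.diagonal_apply, Matrix.mul_apply, Matrix.mul_diagonal,
      Matrix.transpose_apply]
  have h1 : y ⬝ᵥ (Matrix.kroneckerMap (· * ·)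
        (Matrix.diagonal pi - S.transpose * Matrix.diagonal pi * S)
        (1 : Matrix (Fin n) (Fin n) ℝ)) *ᵥ y
      = ∑ j, ∑ α, y (j, α) *
          ∑ k, ((if j = k then pi j else 0) - ∑ i, S i j * pi i * S i k) * y (k, α) := by
    simp only [dotProduct, Matrix.mulVec, Fintype.sum_prod_type,
      Matrix.kroneckerMap_apply, Matrix.one_apply, hM, mul_ite, mul_one, mul_zero, ite_mul,
      zero_mul, Finset.sum_ite_eq, Finset.mem_univ, if_true]
  have h2 : ∀ (j : Fin m) (α : Fin n), y (j, α) *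
        ∑ k, ((if j = k then pi j else 0) - ∑ i, S i j * pi i * S i k) * y (k, α)
      = pi j * y (j, α) ^ 2
        - ∑ k, ∑ i, S i j * pi i * S i k * (y (j, α) * y (k, α)) := by
    intro j α
    have e1 : ∑ k, ((if j = k then pi j else 0) - ∑ i, S i j * pi i * S i k) * y (k, α)
        = pi j * y (j, α) - ∑ k, (∑ i, S i j * pi i * S i k) * y (k, α) := by
      simp only [sub_mul, Finset.sum_sub_distrib, ite_mul, zero_mul, Finset.sum_ite_eq,
        Finset.mem_univ, if_true]
    rw [e1, mul_sub]
    congr 1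
    · ring
    · rw [Finset.mul_sum]
      refine Finset.sum_congr rfl fun k _ => ?_
      rw [Finset.sum_mul, Finset.mul_sum]
      exact Finset.sum_congr rfl fun i _ => by ring
  have h3 : y ⬝ᵥ (Matrix.kroneckerMap (· * ·)
        (Matrix.diagonal pi - S.transpose * Matrix.diagonal pi * S)
        (1 : Matrix (Fin n) (Fin n) ℝ)) *ᵥ y
      = (∑ j, ∑ α, pi j * y (j, α) ^ 2)
        - ∑ j, ∑ α, ∑ k, ∑ i, S i j * pi i * S i k * (y (j, α) * y (k, α)) := by
    rw [h1]
    simp only [h2, Finset.sum_sub_distrib]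
  have hA : (∑ j : Fin m, ∑ α : Fin n, pi j * y (j, α) ^ 2)
      = ∑ i, ∑ α, ∑ j, pi i * S i j * y (j, α) ^ 2 := by
    rw [← stmt14_swap3 (fun j α i => pi i * S i j * y (j, α) ^ 2)]
    refine Finset.sum_congr rfl fun j _ => Finset.sum_congr rfl fun α _ => ?_
    rw [← hstat j, Finset.sum_mul]
    exact Finset.sum_congr rfl fun i _ => by ring
  have hC : (∑ j : Fin m, ∑ α : Fin n, ∑ k : Fin m, ∑ i : Fin m,
        S i j * pi i * S i k * (y (j, α) * y (k, α)))
      = ∑ i, ∑ α, ∑ j, ∑ k, pi i * S i j * S i k * (y (j, α) * y (k, α)) := by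
    rw [stmt14_swap4 (fun j α k i => S i j * pi i * S i k * (y (j, α) * y (k, α)))]
    exact Finset.sum_congr rfl fun i _ => Finset.sum_congr rfl fun α _ =>
      Finset.sum_congr rfl fun j _ => Finset.sum_congr rfl fun k _ => by ring
  have key2 : ∀ (i : Fin m) (α : Fin n),
      ∑ j, ∑ k, pi i * S i j * S i k * (y (j, α) - y (k, α)) ^ 2
        = 2 * (∑ j, pi i * S i j * y (j, α) ^ 2)
          - 2 * ∑ j, ∑ k, pi i * S i j * S i k * (y (j, α) * y (k, α)) := by
    intro i α
    have e : ∀ j k, pi i * S i j * S i k * (y (j, α) - y (k, α)) ^ 2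
        = pi i * S i j * y (j, α) ^ 2 * S i k
          + S i j * (pi i * S i k * y (k, α) ^ 2)
          - 2 * (pi i * S i j * S i k * (y (j, α) * y (k, α))) := fun j k => by ring
    simp only [e, Finset.sum_sub_distrib, Finset.sum_add_distrib, ← Finset.mul_sum,
      ← Finset.sum_mul, hrow i, mul_one, one_mul]
    ring
  have hT : (∑ i : Fin m, ∑ α : Fin n, ∑ j : Fin m, ∑ k : Fin m,
        pi i * S i j * S i k * (y (j, α) - y (k, α)) ^ 2)
      = 2 * (∑ i, ∑ α, ∑ j, pi i * S i j * y (j, α) ^ 2)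
        - 2 * ∑ i, ∑ α, ∑ j, ∑ k, pi i * S i j * S i k * (y (j, α) * y (k, α)) := by
    calc (∑ i : Fin m, ∑ α : Fin n, ∑ j : Fin m, ∑ k : Fin m,
          pi i * S i j * S i k * (y (j, α) - y (k, α)) ^ 2)
        = ∑ i : Fin m, ∑ α : Fin n,
            (2 * (∑ j, pi i * S i j * y (j, α) ^ 2)
              - 2 * ∑ j, ∑ k, pi i * S i j * S i k * (y (j, α) * y (k, α))) :=
          Finset.sum_congr rfl fun i _ => Finset.sum_congr rfl fun α _ => key2 i α
      _ = _ := by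
          simp only [Finset.sum_sub_distrib, ← Finset.mul_sum]
  rw [h3, hA, hC, hT]
  ring

/-- Under the assumptions of Proposition 1, `Vᵀ L̄ V` is positive definite,
where `L̄ = L ⊗ Iₙ` and `L = Π_S − SᵀΠ_S S`. -/
theorem stmt14 {m n : ℕ} {nd : Fin m → ℕ}
    (S : Matrix (Fin m) (Fin m) ℝ)
    (hnonneg : ∀ i j, 0 ≤ S i j)
    (hrow : ∀ i, ∑ j, S i j = 1)
    (hconn : ∀ i j : Fin m, Relation.TransGen (fun a b => S a b ≠ 0) i j)
    (hdiag : ∀ i, 0 < S i i)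
    (pi : Fin m → ℝ) (hpos : ∀ i, 0 < pi i) (hsum : ∑ i, pi i = 1)
    (hPerron : S.transpose.mulVec pi = pi)
    (L : Matrix (Fin m) (Fin m) ℝ)
    (hL : L = Matrix.diagonal pi - S.transpose * Matrix.diagonal pi * S)
    (Lbar : Matrix (Fin m × Fin n) (Fin m × Fin n) ℝ)
    (hLbar : Lbar = Matrix.kroneckerMap (· * ·) L (1 : Matrix (Fin n) (Fin n) ℝ))
    (Vblk : ∀ i : Fin m, Matrix (Fin n) (Fin (nd i)) ℝ)
    (horth : ∀ i, (Vblk i).transpose * Vblk i = 1)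
    (hjoint : (⨅ i : Fin m, LinearMap.range (Vblk i).mulVecLin) = ⊥)
    (V : Matrix (Fin m × Fin n) (Σ i : Fin m, Fin (nd i)) ℝ)
    (hV : ∀ p c, V p c = if p.1 = c.1 then Vblk c.1 p.2 c.2 else 0) :
    (V.transpose * Lbar * V).PosDef := by
  subst hL
  subst hLbar
  have hstat : ∀ j, ∑ i, S i j * pi i = pi j := by
    intro j
    have h := congrFun hPerron j
    simpa [Matrix.mulVec, dotProduct, Matrix.transpose_apply] using h
  rw [Matrix.posDef_iff_dotProduct_mulVec]
  constructor
  · -- Hermitian part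
    have hMent : ∀ a b : Fin m,
        (Matrix.diagonal pi - S.transpose * Matrix.diagonal pi * S) a b
          = (if a = b then pi a else 0) - ∑ i, S i a * pi i * S i b := by
      intro a b
      simp [Matrix.sub_apply, Matrix.diagonal_apply, Matrix.mul_apply, Matrix.mul_diagonal,
        Matrix.transpose_apply]
    have hLsymm : (Matrix.diagonal pi - S.transpose * Matrix.diagonal pi * S).IsHermitian := by
      rw [Matrix.IsHermitian]
      ext a b
      rw [Matrix.conjTranspose_apply, star_trivial, hMent a b, hMent b a]
      congr 1
      · by_cases h : a = b
        · subst h; rfl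
        · rw [if_neg h, if_neg (Ne.symm h)]
      · exact Finset.sum_congr rfl fun i _ => by ring
    have hLbarH : (Matrix.kroneckerMap (· * ·)
        (Matrix.diagonal pi - S.transpose * Matrix.diagonal pi * S)
        (1 : Matrix (Fin n) (Fin n) ℝ)).IsHermitian := by
      rw [Matrix.IsHermitian]
      ext ⟨a, α⟩ ⟨b, β⟩
      have hab := congrFun (congrFun hLsymm b) a
      simp only [Matrix.conjTranspose_apply, star_trivial] at hab ⊢
      simp only [Matrix.kroneckerMap_apply, Matrix.one_apply]
      rw [hab]
      by_cases h : α = β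
      · subst h; rfl
      · rw [if_neg h, if_neg (Ne.symm h)]
    have := Matrix.isHermitian_conjTranspose_mul_mul V hLbarH
    rwa [Matrix.conjTranspose_eq_transpose_of_trivial] at this
  · intro x hx
    have hstarx : star x = x := funext fun c => star_trivial _
    rw [hstarx]
    set y : Fin m × Fin n → ℝ := V *ᵥ x with hy
    have hform : x ⬝ᵥ ((V.transpose * Matrix.kroneckerMap (· * ·)
        (Matrix.diagonal pi - S.transpose * Matrix.diagonal pi * S)
        (1 : Matrix (Fin n) (Fin n) ℝ) * V) *ᵥ x)
        = y ⬝ᵥ (Matrix.kroneckerMap (· * ·)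
            (Matrix.diagonal pi - S.transpose * Matrix.diagonal pi * S)
            (1 : Matrix (Fin n) (Fin n) ℝ)) *ᵥ y := by
      rw [← Matrix.mulVec_mulVec, ← Matrix.mulVec_mulVec, Matrix.dotProduct_mulVec,
        Matrix.vecMul_transpose]
    rw [hform]
    have hkey := stmt14_key S pi hrow hstat y
    have hnn4 : ∀ (i : Fin m) (α : Fin n) (j k : Fin m),
        0 ≤ pi i * S i j * S i k * (y (j, α) - y (k, α)) ^ 2 := fun i α j k =>
      mul_nonneg (mul_nonneg (mul_nonneg (hpos i).le (hnonneg i j)) (hnonneg i k))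
        (sq_nonneg _)
    have hnn3 : ∀ (i : Fin m) (α : Fin n) (j : Fin m),
        0 ≤ ∑ k, pi i * S i j * S i k * (y (j, α) - y (k, α)) ^ 2 := fun i α j =>
      Finset.sum_nonneg fun k _ => hnn4 i α j k
    have hnn2 : ∀ (i : Fin m) (α : Fin n),
        0 ≤ ∑ j, ∑ k, pi i * S i j * S i k * (y (j, α) - y (k, α)) ^ 2 := fun i α =>
      Finset.sum_nonneg fun j _ => hnn3 i α j
    have hnn1 : ∀ i : Fin m,
        0 ≤ ∑ α, ∑ j, ∑ k, pi i * S i j * S i k * (y (j, α) - y (k, α)) ^ 2 := fun i =>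
      Finset.sum_nonneg fun α _ => hnn2 i α
    have hTnn : (0:ℝ) ≤ ∑ i, ∑ α, ∑ j, ∑ k,
        pi i * S i j * S i k * (y (j, α) - y (k, α)) ^ 2 :=
      Finset.sum_nonneg fun i _ => hnn1 i
    have hQnn : 0 ≤ y ⬝ᵥ (Matrix.kroneckerMap (· * ·)
        (Matrix.diagonal pi - S.transpose * Matrix.diagonal pi * S)
        (1 : Matrix (Fin n) (Fin n) ℝ)) *ᵥ y := by linarith
    rcases lt_or_eq_of_le hQnn with hlt | heq
    · exact hlt
    exfalso
    -- the quadratic form vanishes; derive x = 0, contradiction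
    have hT0 : (∑ i, ∑ α, ∑ j, ∑ k,
        pi i * S i j * S i k * (y (j, α) - y (k, α)) ^ 2) = 0 := by
      rw [← hkey, ← heq]; ring
    have hterm : ∀ (i : Fin m) (α : Fin n) (j k : Fin m),
        pi i * S i j * S i k * (y (j, α) - y (k, α)) ^ 2 = 0 := by
      intro i α j k
      have e1 := stmt14_sum_zero hnn1 hT0 i
      have e2 := stmt14_sum_zero (fun α => hnn2 i α) e1 α
      have e3 := stmt14_sum_zero (fun j => hnn3 i α j) e2 j
      exact stmt14_sum_zero (fun k => hnn4 i α j k) e3 k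
    have hstep : ∀ i j : Fin m, S i j ≠ 0 → ∀ α, y (j, α) = y (i, α) := by
      intro i j hS α
      have h := hterm i α j i
      have hSij : 0 < S i j := (hnonneg i j).lt_of_ne (Ne.symm hS)
      have hc : (0:ℝ) < pi i * S i j * S i i :=
        mul_pos (mul_pos (hpos i) hSij) (hdiag i)
      have hsq : (y (j, α) - y (i, α)) ^ 2 = 0 := by
        rcases mul_eq_zero.mp h with h' | h'
        · exact absurd h' (ne_of_gt hc)
        · exact h'
      have := pow_eq_zero_iff (by norm_num : (2:ℕ) ≠ 0) |>.mp hsq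
      exact sub_eq_zero.mp this
    have hall : ∀ i j : Fin m, ∀ α, y (j, α) = y (i, α) := by
      intro i j α
      have h := hconn i j
      induction h with
      | single hr => exact hstep _ _ hr α
      | tail _ hr ih => exact (hstep _ _ hr α).trans ih
    obtain ⟨c, hc⟩ := Function.ne_iff.mp hx
    have hyV : ∀ (i : Fin m) (α : Fin n), y (i, α) = ∑ β, Vblk i α β * x ⟨i, β⟩ := by
      intro i α
      show ∑ d, V (i, α) d * x d = _
      rw [← Finset.univ_sigma_univ, Finset.sum_sigma]
      rw [Finset.sum_eq_single i]
      · exact Finset.sum_congr rfl fun β _ => by rw [hV]; simp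
      · intro j _ hji
        refine Finset.sum_eq_zero fun β _ => ?_
        rw [hV]
        simp [Ne.symm hji]
      · intro h; exact absurd (Finset.mem_univ i) h
    have hrange : ∀ i : Fin m,
        (fun α => y (c.1, α)) ∈ LinearMap.range (Vblk i).mulVecLin := by
      intro i
      refine ⟨fun β => x ⟨i, β⟩, ?_⟩
      funext α
      rw [Matrix.mulVecLin_apply]
      have : (Vblk i *ᵥ fun β => x ⟨i, β⟩) α = ∑ β, Vblk i α β * x ⟨i, β⟩ := rfl
      rw [this, ← hyV i α]
      exact hall c.1 i α
    have hv0 : (fun α => y (c.1, α)) = 0 := by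
      have hmem : (fun α => y (c.1, α)) ∈ ⨅ i, LinearMap.range (Vblk i).mulVecLin :=
        (Submodule.mem_iInf _).mpr hrange
      rw [hjoint] at hmem
      exact (Submodule.mem_bot ℝ).mp hmem
    have hVx : Vblk c.1 *ᵥ (fun β => x ⟨c.1, β⟩) = 0 := by
      funext α
      have h0 : y (c.1, α) = 0 := congrFun hv0 α
      have : (Vblk c.1 *ᵥ fun β => x ⟨c.1, β⟩) α = ∑ β, Vblk c.1 α β * x ⟨c.1, β⟩ := rfl
      rw [this, ← hyV c.1 α, h0]
      rfl
    have hxc : (fun β => x ⟨c.1, β⟩) = 0 := by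
      have h1 : (Vblk c.1).transpose *ᵥ (Vblk c.1 *ᵥ fun β => x ⟨c.1, β⟩)
          = fun β => x ⟨c.1, β⟩ := by
        rw [Matrix.mulVec_mulVec, horth c.1, Matrix.one_mulVec]
      rw [hVx, Matrix.mulVec_zero] at h1
      exact h1.symm
    apply hc
    have := congrFun hxc c.2
    simpa using this
end
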